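/- Let C be a d-dimensional copula with tail order 1 in the corner u₀, i.e., C_{u₀}(t·1_d) ~ L(t)·t as t → 0⁺. Suppose C admits an exponent function Λ: [0,∞)^d → [0,∞) with C_{u₀}(t^{z₁},...,t^{z_d}) ~ L(t;z)·t^{Λ(z)} as t → 0⁺ for slowly varying L(·;z). Then Λ(z₁,...,z_d) = max(z₁,...,z_d) for all z ∈ [0,∞)^d. -/

import Mathlib

open Filter Set

/-- `L` is slowly varying at `0⁺`. -/
def SlowlyVaryingAtZero (L : ℝ → ℝ) : Prop :=
  ∀ c : ℝ, 0 < c →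
    Filter.Tendsto (fun x => L (c * x) / L x) (nhdsWithin 0 (Set.Ioi 0)) (nhds 1)

/-- A positive slowly varying function at `0⁺` cannot be bounded above by a positive
power `K * t ^ δ` near `0⁺`. -/
lemma sv_not_le_rpow (N : ℝ → ℝ) (hN : SlowlyVaryingAtZero N)
    (hpos : ∀ t : ℝ, 0 < t → 0 < N t) (δ K : ℝ) (hδ : 0 < δ)
    (h : ∀ᶠ t in nhdsWithin 0 (Set.Ioi 0), N t ≤ K * t ^ δ) : False := by
  set r : ℝ := (2 : ℝ) ^ (-(δ/2)) with hr
  have hrpos : 0 < r := Real.rpow_pos_of_pos (by norm_num) _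
  have hr1 : r < 1 :=
    Real.rpow_lt_one_of_one_lt_of_neg (by norm_num) (by linarith)
  have hrsq : r ^ 2 = (1/2 : ℝ) ^ δ := by
    rw [hr, ← Real.rpow_natCast ((2:ℝ) ^ (-(δ/2))) 2, ← Real.rpow_mul (by norm_num)]
    rw [show (1/2 : ℝ) = 2⁻¹ by norm_num, ← Real.rpow_neg_one (2:ℝ),
      ← Real.rpow_mul (by norm_num)]
    norm_num
  have hev : ∀ᶠ t in nhdsWithin (0:ℝ) (Set.Ioi 0),
      (r * N t < N ((1/2) * t) ∧ N t ≤ K * t ^ δ) := by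
    have h1 := (hN (1/2) (by norm_num)).eventually (eventually_gt_nhds hr1)
    filter_upwards [h1, h, self_mem_nhdsWithin] with t h1 h2 ht
    exact ⟨(lt_div_iff₀ (hpos t ht)).mp h1, h2⟩
  rw [Filter.Eventually, mem_nhdsGT_iff_exists_Ioo_subset] at hev
  obtain ⟨u, hu, hsub⟩ := hev
  rw [Set.mem_Ioi] at hu
  set t0 : ℝ := u / 2 with ht0
  have ht0m : ∀ n : ℕ, t0 * (1/2) ^ n ∈ Set.Ioo (0:ℝ) u := by
    intro n
    constructor
    · positivity
    · calc t0 * (1/2) ^ n ≤ t0 * 1 := by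
            have : ((1:ℝ)/2) ^ n ≤ 1 := pow_le_one₀ (by norm_num) (by norm_num)
            nlinarith
        _ < u := by rw [ht0]; linarith
  have key : ∀ n : ℕ, r ^ n * N t0 ≤ N (t0 * (1/2) ^ n) := by
    intro n
    induction n with
    | zero => simp
    | succ n ih =>
      have h1 := (hsub (ht0m n)).1
      have : N (t0 * (1/2) ^ (n+1)) = N ((1/2) * (t0 * (1/2)^n)) := by ring_nf
      rw [this]
      calc r ^ (n+1) * N t0 = r * (r ^ n * N t0) := by ring
        _ ≤ r * N (t0 * (1/2)^n) := by nlinarith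
        _ ≤ N ((1/2) * (t0 * (1/2)^n)) := h1.le
  have hbound : ∀ n : ℕ, N t0 ≤ K * t0 ^ δ * r ^ n := by
    intro n
    have h2 := (hsub (ht0m n)).2
    have h3 : (t0 * (1/2) ^ n) ^ δ = t0 ^ δ * (r ^ 2) ^ n := by
      rw [hrsq, Real.mul_rpow (by positivity) (by positivity)]
      congr 1
      rw [← Real.rpow_natCast ((1:ℝ)/2) n, ← Real.rpow_mul (by norm_num),
        mul_comm, Real.rpow_mul (by norm_num), Real.rpow_natCast]
    have h4 : r ^ n * N t0 ≤ K * t0 ^ δ * (r^2) ^ n := by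
      calc r ^ n * N t0 ≤ N (t0 * (1/2)^n) := key n
        _ ≤ K * (t0 * (1/2)^n) ^ δ := h2
        _ = K * t0 ^ δ * (r^2)^n := by rw [h3]; ring
    have h5 : (r^2 : ℝ)^n = r^n * r^n := by ring
    rw [h5] at h4
    have hrn : (0:ℝ) < r ^ n := pow_pos hrpos n
    nlinarith
  have htend : Filter.Tendsto (fun n : ℕ => K * t0 ^ δ * r ^ n) atTop (nhds 0) := by
    have := tendsto_pow_atTop_nhds_zero_of_lt_one hrpos.le hr1
    simpa using (this.const_mul (K * t0 ^ δ))
  have hN0 : 0 < N t0 := hpos t0 (by positivity)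
  obtain ⟨n, hn⟩ := (htend.eventually (eventually_lt_nhds hN0)).exists
  exact absurd (hbound n) (not_le.mpr hn)

/-- The quotient of positive slowly varying functions is slowly varying. -/
lemma sv_div (A B : ℝ → ℝ) (hA : SlowlyVaryingAtZero A) (hB : SlowlyVaryingAtZero B)
    (hApos : ∀ t : ℝ, 0 < t → 0 < A t) (hBpos : ∀ t : ℝ, 0 < t → 0 < B t) :
    SlowlyVaryingAtZero (fun t => A t / B t) := by
  intro c hc
  have h := (hA c hc).div (hB c hc) one_ne_zero
  rw [show (1:ℝ)/1 = 1 by norm_num] at h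
  refine h.congr' ?_
  filter_upwards [self_mem_nhdsWithin] with t ht
  have ht' : (0:ℝ) < t := ht
  have h1 := hApos t ht
  have h2 := hBpos t ht
  have h3 := hApos (c*t) (by positivity)
  have h4 := hBpos (c*t) (by positivity)
  simp only [Pi.div_apply]
  field_simp

lemma eventually_bounds (f h : ℝ → ℝ)
    (hpos : ∀ᶠ t in nhdsWithin (0:ℝ) (Set.Ioi 0), 0 < h t)
    (ht : Filter.Tendsto (fun t => f t / h t) (nhdsWithin 0 (Set.Ioi 0)) (nhds 1)) :
    ∀ᶠ t in nhdsWithin (0:ℝ) (Set.Ioi 0), h t ≤ 2 * f t ∧ f t ≤ 2 * h t := by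
  have h1 := ht.eventually (eventually_mem_set.mpr
    (Ioo_mem_nhds (by norm_num : (1/2:ℝ) < 1) (by norm_num : (1:ℝ) < 2)))
  filter_upwards [h1, hpos] with t h1 hp
  obtain ⟨ha, hb⟩ := h1
  constructor
  · nlinarith [(div_lt_iff₀ hp).mp hb, (lt_div_iff₀ hp).mp ha]
  · nlinarith [(div_lt_iff₀ hp).mp hb]

lemma rpow_map_tendsto {m : ℝ} (hm : 0 < m) :
    Filter.Tendsto (fun t : ℝ => t ^ m) (nhdsWithin 0 (Set.Ioi 0))
      (nhdsWithin 0 (Set.Ioi 0)) := by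
  rw [tendsto_nhdsWithin_iff]
  constructor
  · have hc : ContinuousAt (fun x : ℝ => x ^ m) 0 :=
      Real.continuousAt_rpow_const 0 m (Or.inr hm.le)
    have := hc.tendsto.mono_left (nhdsWithin_le_nhds (s := Set.Ioi 0))
    simpa [Real.zero_rpow hm.ne'] using this
  · filter_upwards [self_mem_nhdsWithin] with t ht
    exact Real.rpow_pos_of_pos ht m

/-- If `g ~ N(t) t^a` with `N` slowly varying and positive, and
`Lm(t) t^b / 2 ≤ g(t) ≤ t^b` with `Lm` slowly varying positive, then `a = b`. -/
lemma exponent_eq (N Lm g : ℝ → ℝ) (a b : ℝ)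
    (hN : SlowlyVaryingAtZero N) (hNpos : ∀ t : ℝ, 0 < t → 0 < N t)
    (hLm : SlowlyVaryingAtZero Lm) (hLmpos : ∀ t : ℝ, 0 < t → 0 < Lm t)
    (htend : Filter.Tendsto (fun t => g t / (N t * t ^ a))
      (nhdsWithin 0 (Set.Ioi 0)) (nhds 1))
    (hub : ∀ᶠ t in nhdsWithin (0:ℝ) (Set.Ioi 0), g t ≤ t ^ b)
    (hlb : ∀ᶠ t in nhdsWithin (0:ℝ) (Set.Ioi 0), Lm t * t ^ b ≤ 2 * g t) :
    a = b := by
  have hpos : ∀ᶠ t in nhdsWithin (0:ℝ) (Set.Ioi 0), 0 < N t * t ^ a := by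
    filter_upwards [self_mem_nhdsWithin] with t ht
    have ht' : (0:ℝ) < t := ht
    exact mul_pos (hNpos t ht') (Real.rpow_pos_of_pos ht' a)
  have hbd := eventually_bounds g _ hpos htend
  by_contra hne
  rcases lt_or_gt_of_ne hne with hab | hab
  · refine sv_not_le_rpow N hN hNpos (b - a) 2 (by linarith) ?_
    filter_upwards [hbd, hub, self_mem_nhdsWithin] with t h1 h2 ht
    have ht' : (0:ℝ) < t := ht
    have h3 : N t * t ^ a ≤ 2 * t ^ b := le_trans h1.1 (by linarith)
    have h4 : t ^ b = t ^ (b - a) * t ^ a := by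
      rw [← Real.rpow_add ht']; ring_nf
    have h5 : (0:ℝ) < t ^ a := Real.rpow_pos_of_pos ht' a
    rw [h4] at h3
    exact (mul_le_mul_iff_of_pos_right h5).mp (h3.trans (le_of_eq (by ring)))
  · refine sv_not_le_rpow (fun t => Lm t / N t)
      (sv_div Lm N hLm hN hLmpos hNpos)
      (fun t ht => div_pos (hLmpos t ht) (hNpos t ht)) (a - b) 4 (by linarith) ?_
    filter_upwards [hbd, hlb, self_mem_nhdsWithin] with t h1 h2 ht
    have ht' : (0:ℝ) < t := ht
    have h3 : Lm t * t ^ b ≤ 4 * (N t * t ^ a) := by nlinarith [h1.2]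
    have h4 : t ^ a = t ^ (a - b) * t ^ b := by
      rw [← Real.rpow_add ht']; ring_nf
    have h5 : (0:ℝ) < t ^ b := Real.rpow_pos_of_pos ht' b
    have h6 : (0:ℝ) < N t := hNpos t ht'
    rw [h4] at h3
    rw [div_le_iff₀ h6]
    exact (mul_le_mul_iff_of_pos_right h5).mp (h3.trans (le_of_eq (by ring)))

lemma sv_one : SlowlyVaryingAtZero (fun _ : ℝ => (1:ℝ)) := by
  intro c hc
  simp only [div_one]
  exact tendsto_const_nhds

/-- If a `d`-dimensional copula `C` (here `C = C_{u₀}`, itself a copula: monotone with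
uniform margins) has tail order 1, i.e. `C(t·1_d) ~ L(t)·t` as `t → 0⁺`, and admits an
exponent function `Λ` with `C(t^{z₁},...,t^{z_d}) ~ M(z)(t)·t^{Λ(z)}` as `t → 0⁺` for
slowly varying `M(z)`, then `Λ(z) = max(z₁,...,z_d)` for all `z ∈ [0,∞)^d`. -/
theorem stmt10 (d : ℕ) (hd : 0 < d) (C : (Fin d → ℝ) → ℝ)
    (hmono : Monotone C)
    (hmargin : ∀ i : Fin d, ∀ t ∈ Set.Icc (0 : ℝ) 1,
      C (Function.update (fun _ => (1 : ℝ)) i t) = t)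
    (L : ℝ → ℝ) (hL : SlowlyVaryingAtZero L) (hLpos : ∀ x : ℝ, 0 < x → 0 < L x)
    (htail : Filter.Tendsto (fun t => C (fun _ => t) / (L t * t))
      (nhdsWithin 0 (Set.Ioi 0)) (nhds 1))
    (Λ : (Fin d → ℝ) → ℝ) (M : (Fin d → ℝ) → ℝ → ℝ)
    (hM : ∀ z : Fin d → ℝ, (∀ i, 0 ≤ z i) →
      SlowlyVaryingAtZero (M z) ∧ ∀ t : ℝ, 0 < t → 0 < M z t)
    (hΛ : ∀ z : Fin d → ℝ, (∀ i, 0 ≤ z i) →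
      Filter.Tendsto (fun t : ℝ => C (fun i => t ^ z i) / (M z t * t ^ Λ z))
        (nhdsWithin 0 (Set.Ioi 0)) (nhds 1)) :
    ∀ z : Fin d → ℝ, (∀ i, 0 ≤ z i) → Λ z = ⨆ i, z i := by
  intro z hz
  haveI : Nonempty (Fin d) := ⟨⟨0, hd⟩⟩
  set m := ⨆ i, z i with hmdef
  have hbdd : BddAbove (Set.range z) := (Set.finite_range z).bddAbove
  have hzm : ∀ i, z i ≤ m := fun i => le_ciSup hbdd i
  obtain ⟨j, hjmax⟩ := Finite.exists_max z
  have hj : z j = m := le_antisymm (hzm j) (ciSup_le hjmax)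
  have hm0 : 0 ≤ m := hj ▸ hz j
  obtain ⟨hMsv, hMpos⟩ := hM z hz
  have htendz := hΛ z hz
  rcases eq_or_lt_of_le hm0 with hm0' | hmpos
  · -- all exponents are zero
    have hz0 : ∀ i, z i = 0 := fun i => le_antisymm (hm0' ▸ hzm i) (hz i)
    have hC1 : C (fun _ : Fin d => (1:ℝ)) = 1 := by
      have h := hmargin j 1 ⟨zero_le_one, le_refl 1⟩
      rwa [show Function.update (fun _ : Fin d => (1:ℝ)) j 1
        = fun _ : Fin d => (1:ℝ) from Function.update_eq_self j _] at h
    have htendz' : Filter.Tendsto (fun t : ℝ => (1:ℝ) / (M z t * t ^ Λ z))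
        (nhdsWithin 0 (Set.Ioi 0)) (nhds 1) := by
      refine htendz.congr (fun t => ?_)
      have : (fun i => t ^ z i) = fun _ : Fin d => (1:ℝ) := by
        funext i; rw [hz0 i, Real.rpow_zero]
      rw [this, hC1]
    rw [← hm0']
    refine exponent_eq (M z) (fun _ => 1) (fun _ => 1) (Λ z) 0 hMsv hMpos
      sv_one (fun t _ => one_pos) htendz' ?_ ?_
    · filter_upwards [self_mem_nhdsWithin] with t ht
      rw [Real.rpow_zero]
    · filter_upwards [self_mem_nhdsWithin] with t ht
      rw [Real.rpow_zero]; norm_num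
  · -- m > 0
    have hφ := rpow_map_tendsto hmpos
    set Lm : ℝ → ℝ := fun t => L (t ^ m) with hLmdef
    have hLmpos : ∀ t : ℝ, 0 < t → 0 < Lm t :=
      fun t ht => hLpos _ (Real.rpow_pos_of_pos ht m)
    have hLmsv : SlowlyVaryingAtZero Lm := by
      intro c hc
      have h1 := (hL (c ^ m) (Real.rpow_pos_of_pos hc m)).comp hφ
      refine h1.congr' ?_
      filter_upwards [self_mem_nhdsWithin] with t ht
      have ht' : (0:ℝ) < t := ht
      simp only [Function.comp_apply, hLmdef]
      rw [← Real.mul_rpow hc.le ht'.le]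
    have htail' : Filter.Tendsto (fun t : ℝ => C (fun _ : Fin d => t ^ m) / (Lm t * t ^ m))
        (nhdsWithin 0 (Set.Ioi 0)) (nhds 1) := by
      have := htail.comp hφ
      exact this
    have hCm : ∀ᶠ t in nhdsWithin (0:ℝ) (Set.Ioi 0),
        Lm t * t ^ m ≤ 2 * C (fun _ : Fin d => t ^ m) := by
      have hp : ∀ᶠ t in nhdsWithin (0:ℝ) (Set.Ioi 0), 0 < Lm t * t ^ m := by
        filter_upwards [self_mem_nhdsWithin] with t ht
        have ht' : (0:ℝ) < t := ht
        exact mul_pos (hLmpos t ht') (Real.rpow_pos_of_pos ht' m)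
      exact (eventually_bounds _ _ hp htail').mono (fun t h => h.1)
    have hIoo : ∀ᶠ t in nhdsWithin (0:ℝ) (Set.Ioi 0), t ∈ Set.Ioo (0:ℝ) 1 :=
      Ioo_mem_nhdsGT_of_mem ⟨le_refl (0:ℝ), one_pos⟩
    have hub : ∀ᶠ t in nhdsWithin (0:ℝ) (Set.Ioi 0), C (fun i => t ^ z i) ≤ t ^ m := by
      filter_upwards [hIoo] with t ht
      obtain ⟨ht0, ht1⟩ := ht
      have h1 : (fun i => t ^ z i) ≤ Function.update (fun _ : Fin d => (1:ℝ)) j (t ^ z j) := by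
        intro i
        rcases eq_or_ne i j with rfl | hij
        · simp
        · rw [Function.update_of_ne hij]
          exact Real.rpow_le_one ht0.le ht1.le (hz i)
      have h2 := hmono h1
      rw [hmargin j (t ^ z j)
        ⟨(Real.rpow_pos_of_pos ht0 _).le, Real.rpow_le_one ht0.le ht1.le (hz j)⟩] at h2
      rwa [hj] at h2
    have hlb : ∀ᶠ t in nhdsWithin (0:ℝ) (Set.Ioi 0),
        Lm t * t ^ m ≤ 2 * C (fun i => t ^ z i) := by
      filter_upwards [hIoo, hCm] with t ht hCmt
      refine hCmt.trans ?_
      have h1 : (fun _ : Fin d => t ^ m) ≤ fun i => t ^ z i := fun i =>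
        Real.rpow_le_rpow_of_exponent_ge ht.1 ht.2.le (hzm i)
      linarith [hmono h1]
    exact exponent_eq (M z) Lm _ (Λ z) m hMsv hMpos hLmsv hLmpos htendz hub hlb
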